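/- For integers a,b,c,d with 4 < a < c < d < b and a+b = c+d, the graphs C_{a,b} and C_{c,d} are distinguished by the Weisfeiler-Lehman color refinement test: after a rounds of refinement starting from initial colors given by degrees, the multisets of vertex colors of the two graphs differ. -/

import Mathlib

/-- Adjacency relation of a cycle on `Fin n`. -/
def cyc (n : ℕ) (i j : Fin n) : Prop :=
  i ≠ j ∧ ((i.val + 1) % n = j.val ∨ (j.val + 1) % n = i.val)

instance (n : ℕ) : DecidableRel (cyc n) := fun i j => by unfold cyc; infer_instance

lemma cyc_symm {n : ℕ} {i j : Fin n} (h : cyc n i j) : cyc n j i :=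
  ⟨h.1.symm, h.2.symm⟩

/-- Adjacency of `C_{a,b}`: two disjoint cycles joined by a bridge between vertex `0`
of each cycle. -/
def cAdj (a b : ℕ) (u v : Fin a ⊕ Fin b) : Prop :=
  (∃ i j, u = Sum.inl i ∧ v = Sum.inl j ∧ cyc a i j) ∨
  (∃ i j, u = Sum.inr i ∧ v = Sum.inr j ∧ cyc b i j) ∨
  (∃ i j, u = Sum.inl i ∧ v = Sum.inr j ∧ i.val = 0 ∧ j.val = 0) ∨
  (∃ i j, u = Sum.inr i ∧ v = Sum.inl j ∧ i.val = 0 ∧ j.val = 0)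

instance (a b : ℕ) : DecidableRel (cAdj a b) := fun u v => by unfold cAdj; infer_instance

/-- The graph `C_{a,b}`: disjoint cycles of lengths `a` and `b` joined by a single bridge. -/
def Cgraph (a b : ℕ) : SimpleGraph (Fin a ⊕ Fin b) where
  Adj := cAdj a b
  symm := by
    constructor
    intro u v h
    rcases h with ⟨i, j, rfl, rfl, hc⟩ | ⟨i, j, rfl, rfl, hc⟩ |
      ⟨i, j, rfl, rfl, hc⟩ | ⟨i, j, rfl, rfl, hc⟩
    · exact Or.inl ⟨j, i, rfl, rfl, cyc_symm hc⟩
    · exact Or.inr (Or.inl ⟨j, i, rfl, rfl, cyc_symm hc⟩)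
    · exact Or.inr (Or.inr (Or.inr ⟨j, i, rfl, rfl, hc.2, hc.1⟩))
    · exact Or.inr (Or.inr (Or.inl ⟨j, i, rfl, rfl, hc.2, hc.1⟩))
  loopless := by
    constructor
    intro u h
    rcases h with ⟨i, j, h1, h2, hc⟩ | ⟨i, j, h1, h2, hc⟩ |
      ⟨i, j, h1, h2, hc⟩ | ⟨i, j, h1, h2, hc⟩ <;> subst h1 <;> simp_all [cyc]

instance (a b : ℕ) : DecidableRel (Cgraph a b).Adj :=
  fun u v => inferInstanceAs (Decidable (cAdj a b u v))

/-- Color space of the `k`-th round of 1-WL color refinement (initial colors are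
natural numbers, e.g. degrees). -/
def WLType : ℕ → Type
  | 0 => ℕ
  | k + 1 => WLType k × Multiset (WLType k)

/-- 1-WL color refinement, initialized with vertex degrees: at each round the new
color of a vertex is the pair of its old color and the multiset of its
neighbors' old colors. -/
def wl {V : Type*} [Fintype V] [DecidableEq V] (G : SimpleGraph V)
    [DecidableRel G.Adj] : (k : ℕ) → V → WLType k
  | 0 => fun v => G.degree v
  | k + 1 => fun v => (wl G k v, (G.neighborFinset v).val.map (wl G k))

/-! ### Auxiliary material -/

instance instDecEqWL : (k : ℕ) → DecidableEq (WLType k)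
  | 0 => inferInstanceAs (DecidableEq ℕ)
  | k + 1 =>
    letI := instDecEqWL k
    inferInstanceAs (DecidableEq (WLType k × Multiset (WLType k)))

/-- The "generic" color of a vertex all of whose `k`-neighborhood is a path of
degree-2 vertices. -/
def g : (k : ℕ) → WLType k
  | 0 => (2 : ℕ)
  | k + 1 => (g k, Multiset.replicate 2 (g k))

/-- Distance to the hub (vertex `0`) of a vertex's own cycle. -/
def D (n m : ℕ) : Fin n ⊕ Fin m → ℕ
  | .inl i => min i.val (n - i.val)
  | .inr j => min j.val (m - j.val)

lemma succ_mod_cases {x n : ℕ} (hx : x < n) :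
    ((x + 1) % n = 0 ∧ x + 1 = n) ∨ (x + 1) % n = x + 1 := by
  rcases Nat.lt_or_ge (x + 1) n with h | h
  · right; exact Nat.mod_eq_of_lt h
  · left
    have : x + 1 = n := by omega
    simp [this]

lemma pred_mod_cases {x n : ℕ} (hn : 1 ≤ n) (hx : x < n) :
    ((x + n - 1) % n = n - 1 ∧ x = 0) ∨ ((x + n - 1) % n = x - 1 ∧ 1 ≤ x) := by
  rcases Nat.eq_zero_or_pos x with h | h
  · left; subst h
    refine ⟨?_, rfl⟩
    simpa using Nat.mod_eq_of_lt (show n - 1 < n by omega)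
  · right
    refine ⟨?_, h⟩
    rw [show x + n - 1 = (x - 1) + 1 * n by omega, Nat.add_mul_mod_self_right]
    exact Nat.mod_eq_of_lt (by omega)

section Graph

variable {n m : ℕ}

lemma adj_inl_inl {i j : Fin n} : (Cgraph n m).Adj (Sum.inl i) (Sum.inl j) ↔ cyc n i j := by
  show cAdj n m _ _ ↔ _; simp [cAdj]

lemma adj_inr_inr {i j : Fin m} : (Cgraph n m).Adj (Sum.inr i) (Sum.inr j) ↔ cyc m i j := by
  show cAdj n m _ _ ↔ _; simp [cAdj]

lemma adj_inl_inr {i : Fin n} {j : Fin m} :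
    (Cgraph n m).Adj (Sum.inl i) (Sum.inr j) ↔ i.val = 0 ∧ j.val = 0 := by
  show cAdj n m _ _ ↔ _; simp [cAdj]

lemma adj_inr_inl {i : Fin m} {j : Fin n} :
    (Cgraph n m).Adj (Sum.inr i) (Sum.inl j) ↔ i.val = 0 ∧ j.val = 0 := by
  show cAdj n m _ _ ↔ _; simp [cAdj]

lemma cyc_iff (hn : 3 ≤ n) (i j : Fin n) :
    cyc n i j ↔ (j.val = (i.val + 1) % n ∨ j.val = (i.val + n - 1) % n) := by
  have hiv := i.isLt; have hjv := j.isLt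
  have h1 := succ_mod_cases hiv
  have h2 := pred_mod_cases (by omega : 1 ≤ n) hiv
  have h3 := succ_mod_cases hjv
  have h4 : (i.val + 1) % n < n := Nat.mod_lt _ (by omega)
  have h5 : (j.val + 1) % n < n := Nat.mod_lt _ (by omega)
  have h6 : (i.val + n - 1) % n < n := Nat.mod_lt _ (by omega)
  unfold cyc
  rw [ne_eq, Fin.ext_iff]
  omega

/-- successor of a vertex on the cycle -/
def sfin (hn : 0 < n) (i : Fin n) : Fin n := ⟨(i.val + 1) % n, Nat.mod_lt _ hn⟩

/-- predecessor of a vertex on the cycle -/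
def pfin (hn : 0 < n) (i : Fin n) : Fin n := ⟨(i.val + n - 1) % n, Nat.mod_lt _ hn⟩

lemma nbhd_inl (hn : 3 ≤ n) (hm : 3 ≤ m) (i : Fin n) :
    (Cgraph n m).neighborFinset (Sum.inl i) =
      if i.val = 0 then
        {Sum.inl (sfin (by omega) i), Sum.inl (pfin (by omega) i), Sum.inr ⟨0, by omega⟩}
      else
        {Sum.inl (sfin (by omega) i), Sum.inl (pfin (by omega) i)} := by
  ext w
  rw [SimpleGraph.mem_neighborFinset]
  rcases w with j | j
  · rw [adj_inl_inl, cyc_iff hn]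
    split <;> simp [sfin, pfin, Fin.ext_iff]
  · rw [adj_inl_inr]
    split <;> rename_i h <;> simp [sfin, pfin, Fin.ext_iff, h]

lemma nbhd_inr (hn : 3 ≤ n) (hm : 3 ≤ m) (i : Fin m) :
    (Cgraph n m).neighborFinset (Sum.inr i) =
      if i.val = 0 then
        {Sum.inr (sfin (by omega) i), Sum.inr (pfin (by omega) i), Sum.inl ⟨0, by omega⟩}
      else
        {Sum.inr (sfin (by omega) i), Sum.inr (pfin (by omega) i)} := by
  ext w
  rw [SimpleGraph.mem_neighborFinset]
  rcases w with j | j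
  · rw [adj_inr_inl]
    split <;> rename_i h <;> simp [sfin, pfin, Fin.ext_iff, h]
  · rw [adj_inr_inr, cyc_iff hm]
    split <;> simp [sfin, pfin, Fin.ext_iff]

lemma sfin_ne_pfin (hn : 3 ≤ n) (i : Fin n) : sfin (by omega : 0 < n) i ≠ pfin (by omega) i := by
  have h1 := succ_mod_cases i.isLt
  have h2 := pred_mod_cases (by omega : 1 ≤ n) i.isLt
  simp only [sfin, pfin, ne_eq, Fin.ext_iff]
  omega

lemma degree_eq (hn : 3 ≤ n) (hm : 3 ≤ m) (v : Fin n ⊕ Fin m) :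
    (Cgraph n m).degree v = if D n m v = 0 then 3 else 2 := by
  have key : ∀ (k : ℕ) (hk : 3 ≤ k) (i : Fin k), (min i.val (k - i.val) = 0) ↔ i.val = 0 := by
    intro k hk i; have := i.isLt; omega
  rcases v with i | i
  · rw [SimpleGraph.degree, nbhd_inl hn hm, D]
    have hsp := sfin_ne_pfin hn i
    rcases eq_or_ne i.val 0 with h | h
    · rw [if_pos h, if_pos ((key n hn i).2 h),
        Finset.card_insert_of_notMem (by simp [hsp]),
        Finset.card_insert_of_notMem (by simp), Finset.card_singleton]
    · rw [if_neg h, if_neg (fun hc => h ((key n hn i).1 hc)),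
        Finset.card_insert_of_notMem (by simp [hsp]), Finset.card_singleton]
  · rw [SimpleGraph.degree, nbhd_inr hn hm, D]
    have hsp := sfin_ne_pfin hm i
    rcases eq_or_ne i.val 0 with h | h
    · rw [if_pos h, if_pos ((key m hm i).2 h),
        Finset.card_insert_of_notMem (by simp [hsp]),
        Finset.card_insert_of_notMem (by simp), Finset.card_singleton]
    · rw [if_neg h, if_neg (fun hc => h ((key m hm i).1 hc)),
        Finset.card_insert_of_notMem (by simp [hsp]), Finset.card_singleton]

lemma D_adj (hn : 3 ≤ n) (hm : 3 ≤ m) {v w : Fin n ⊕ Fin m}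
    (h : (Cgraph n m).Adj v w) : D n m v ≤ D n m w + 1 := by
  rcases v with i | i <;> rcases w with j | j
  · rw [adj_inl_inl, cyc_iff hn] at h
    have h1 := succ_mod_cases i.isLt
    have h2 := pred_mod_cases (by omega : 1 ≤ n) i.isLt
    have := i.isLt; have := j.isLt
    simp only [D]; omega
  · rw [adj_inl_inr] at h
    simp [D, h.1]
  · rw [adj_inr_inl] at h
    simp [D, h.1]
  · rw [adj_inr_inr, cyc_iff hm] at h
    have h1 := succ_mod_cases i.isLt
    have h2 := pred_mod_cases (by omega : 1 ≤ m) i.isLt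
    have := i.isLt; have := j.isLt
    simp only [D]; omega

lemma D_descent (hn : 3 ≤ n) (hm : 3 ≤ m) (v : Fin n ⊕ Fin m) (hv : 0 < D n m v) :
    ∃ w, (Cgraph n m).Adj v w ∧ D n m w < D n m v := by
  rcases v with i | i
  · by_cases h : 2 * i.val ≤ n
    · refine ⟨Sum.inl (pfin (by omega) i), ?_, ?_⟩
      · rw [adj_inl_inl, cyc_iff hn]; right; rfl
      · have h2 := pred_mod_cases (by omega : 1 ≤ n) i.isLt
        have := i.isLt
        simp only [D, pfin] at hv ⊢; omega
    · refine ⟨Sum.inl (sfin (by omega) i), ?_, ?_⟩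
      · rw [adj_inl_inl, cyc_iff hn]; left; rfl
      · have h1 := succ_mod_cases i.isLt
        have := i.isLt
        simp only [D, sfin] at hv ⊢; omega
  · by_cases h : 2 * i.val ≤ m
    · refine ⟨Sum.inr (pfin (by omega) i), ?_, ?_⟩
      · rw [adj_inr_inr, cyc_iff hm]; right; rfl
      · have h2 := pred_mod_cases (by omega : 1 ≤ m) i.isLt
        have := i.isLt
        simp only [D, pfin] at hv ⊢; omega
    · refine ⟨Sum.inr (sfin (by omega) i), ?_, ?_⟩
      · rw [adj_inr_inr, cyc_iff hm]; left; rfl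
      · have h1 := succ_mod_cases i.isLt
        have := i.isLt
        simp only [D, sfin] at hv ⊢; omega

/-- Main structural lemma: after `k` rounds, a vertex has the generic color `g k`
iff it is at distance more than `k` from the hub of its own cycle. -/
lemma wl_eq_g_iff (hn : 3 ≤ n) (hm : 3 ≤ m) :
    ∀ (k : ℕ) (v : Fin n ⊕ Fin m), wl (Cgraph n m) k v = g k ↔ k < D n m v := by
  intro k
  induction k with
  | zero =>
    intro v
    show ((Cgraph n m).degree v : WLType 0) = (2 : ℕ) ↔ 0 < D n m v
    rw [degree_eq hn hm]
    split <;> rename_i h <;> constructor <;> intro h' <;> omega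
  | succ k ih =>
    intro v
    constructor
    · intro h
      by_contra hlt
      push_neg at hlt
      have h' : wl (Cgraph n m) (k+1) v
          = (wl (Cgraph n m) k v, ((Cgraph n m).neighborFinset v).val.map (wl (Cgraph n m) k)) := rfl
      rw [h'] at h
      have hg : g (k+1) = (g k, Multiset.replicate 2 (g k)) := rfl
      rw [hg] at h; replace h := (Prod.mk.injEq _ _ _ _).mp h
      rcases Nat.lt_or_ge k (D n m v) with hd | hd
      · -- D v = k + 1 : take a descending neighbor
        obtain ⟨w, hadj, hw⟩ := D_descent hn hm v (by omega)
        have hmem : wl (Cgraph n m) k w ∈ ((Cgraph n m).neighborFinset v).val.map (wl (Cgraph n m) k) :=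
          Multiset.mem_map_of_mem _ (by rwa [← Finset.mem_def, SimpleGraph.mem_neighborFinset])
        rw [h.2] at hmem
        have : wl (Cgraph n m) k w = g k := Multiset.eq_of_mem_replicate hmem
        rw [ih w] at this
        omega
      · -- D v ≤ k : first components differ
        have := (ih v).1 h.1
        omega
    · intro h
      have h' : wl (Cgraph n m) (k+1) v
          = (wl (Cgraph n m) k v, ((Cgraph n m).neighborFinset v).val.map (wl (Cgraph n m) k)) := rfl
      have hg : g (k+1) = (g k, Multiset.replicate 2 (g k)) := rfl
      rw [h', hg]; refine (Prod.mk.injEq _ _ _ _).mpr ?_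
      constructor
      · rw [ih v]; omega
      · rw [Multiset.eq_replicate]
        constructor
        · rw [Multiset.card_map]
          show (Cgraph n m).degree v = 2
          rw [degree_eq hn hm]
          split <;> rename_i hh <;> omega
        · intro x hx
          obtain ⟨w, hw, rfl⟩ := Multiset.mem_map.1 hx
          rw [← Finset.mem_def, SimpleGraph.mem_neighborFinset] at hw
          have := D_adj hn hm hw
          rw [ih w]; omega

end Graph

/-! ### Counting -/

lemma card_filter_fin (n : ℕ) (p : ℕ → Prop) [DecidablePred p] :
    (Finset.univ.filter fun i : Fin n => p i.val).card = ((Finset.range n).filter p).card := by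
  apply Finset.card_bij (fun i _ => i.val)
  · intro i hi
    simp only [Finset.mem_filter, Finset.mem_univ, true_and] at hi
    simp [Finset.mem_filter, Finset.mem_range, i.isLt, hi]
  · intro i _ j _ h
    exact Fin.ext h
  · intro x hx
    simp only [Finset.mem_filter, Finset.mem_range] at hx
    exact ⟨⟨x, hx.1⟩, by simp [hx.2], rfl⟩

lemma card_fin_far (n k : ℕ) :
    (Finset.univ.filter fun i : Fin n => k < min i.val (n - i.val)).card = n - (2 * k + 1) := by
  rw [card_filter_fin n (fun x => k < min x (n - x))]
  have : (Finset.range n).filter (fun x => k < min x (n - x)) = Finset.Ico (k+1) (n-k) := by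
    ext x
    simp only [Finset.mem_filter, Finset.mem_range, Finset.mem_Ico]
    omega
  rw [this, Nat.card_Ico]
  omega

lemma count_g_eq (n m : ℕ) (hn : 3 ≤ n) (hm : 3 ≤ m) (k : ℕ) :
    Multiset.count (g k) (Finset.univ.val.map (wl (Cgraph n m) k))
      = (n - (2 * k + 1)) + (m - (2 * k + 1)) := by
  classical
  rw [Multiset.count_map]
  have h1 : (Finset.univ.val.filter fun v => g k = wl (Cgraph n m) k v)
      = (Finset.univ.val.filter fun v => k < D n m v) := by
    apply Multiset.filter_congr
    intro v _
    rw [eq_comm, wl_eq_g_iff hn hm]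
  rw [h1]
  have h2 : (Finset.univ.val.filter fun v => k < D n m v).card
      = (Finset.univ.filter fun v : Fin n ⊕ Fin m => k < D n m v).card := rfl
  rw [h2]
  rw [← Finset.card_toLeft_add_card_toRight]
  have hL : (Finset.univ.filter fun v : Fin n ⊕ Fin m => k < D n m v).toLeft
      = Finset.univ.filter fun i : Fin n => k < min i.val (n - i.val) := by
    ext i; rw [Finset.mem_toLeft, Finset.mem_filter, Finset.mem_filter]; simp [D]
  have hR : (Finset.univ.filter fun v : Fin n ⊕ Fin m => k < D n m v).toRight
      = Finset.univ.filter fun i : Fin m => k < min i.val (m - i.val) := by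
    ext i; rw [Finset.mem_toRight, Finset.mem_filter, Finset.mem_filter]; simp [D]
  rw [hL, hR, card_fin_far, card_fin_far]

/-! ### Projection between rounds -/

/-- First component of a refined color. -/
def wlFst (l : ℕ) : WLType (l+1) → WLType l :=
  fun x => (x : WLType l × Multiset (WLType l)).1

lemma wl_multiset_down {V W : Type*} [Fintype V] [DecidableEq V] [Fintype W] [DecidableEq W]
    (G : SimpleGraph V) (H : SimpleGraph W) [DecidableRel G.Adj] [DecidableRel H.Adj]
    {k l : ℕ} (hkl : k ≤ l)
    (h : Finset.univ.val.map (wl G l) = Finset.univ.val.map (wl H l)) :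
    Finset.univ.val.map (wl G k) = Finset.univ.val.map (wl H k) := by
  induction l with
  | zero =>
    have : k = 0 := by omega
    subst this; exact h
  | succ l ihl =>
    rcases Nat.eq_or_lt_of_le hkl with rfl | hlt
    · exact h
    · apply ihl (by omega)
      have hh := congrArg (Multiset.map (wlFst l)) h
      rw [Multiset.map_map, Multiset.map_map] at hh
      have eG : (wlFst l ∘ wl G (l+1)) = wl G l := funext fun v => rfl
      have eH : (wlFst l ∘ wl H (l+1)) = wl H l := funext fun v => rfl
      rwa [eG, eH] at hh

theorem WL_distinguishes (a b c d : ℕ) (ha : 4 < a) (hac : a < c) (hcd : c < d)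
    (hdb : d < b) (hsum : a + b = c + d) :
    Finset.univ.val.map (wl (Cgraph a b) a)
      ≠ Finset.univ.val.map (wl (Cgraph c d) a) := by
  intro h
  set k := (a + 1) / 2 with hk
  have hka : k ≤ a := by omega
  have h2 : Finset.univ.val.map (wl (Cgraph a b) k) = Finset.univ.val.map (wl (Cgraph c d) k) :=
    wl_multiset_down _ _ hka h
  have hcount := congrArg (Multiset.count (g k)) h2
  rw [count_g_eq a b (by omega) (by omega) k, count_g_eq c d (by omega) (by omega) k] at hcount
  omega
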